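/- Let n ≥ 2, m ≥ 2 and v ≥ 1 be integers. Let J(2^n, R_m)_v denote the set of elements of R_m = ℤ[x_1, ..., x_m] of the form Σ_{t=1}^v ε_t f_t^{2^n} with f_t ∈ R_m and ε_t ∈ {+1, −1}. Let Π: J(2^n, R_m) → (ℤ/2ℤ)^{P} (P the set of pairs (i, j) with 1 ≤ i < j ≤ m) be the additive group homomorphism whose (i, j)-component sends each generator f^{2^n} to the residue mod 2 of c_{f^{2^n}}(x_i x_j)/2^n + c_{f^{2^n}}(x_i^{2^{n−1}} x_j^{2^{n−1}})/2. Then the image Π(J(2^n, R_m)_v) has at most 2^{v·m} elements. -/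

import Mathlib

open MvPolynomial Finsupp

lemma zmod2_mul_self (x : ZMod 2) : x * x = x := by revert x; decide

lemma zmod2_pow (x : ZMod 2) {k : ℕ} (hk : 1 ≤ k) : x ^ k = x := by
  induction k, hk using Nat.le_induction with
  | base => exact pow_one x
  | succ k hk ih => rw [pow_succ, ih, zmod2_mul_self]

lemma aux_cc_pderiv2 {m : ℕ} (i j : Fin m) (hij : i ≠ j) (P : MvPolynomial (Fin m) ℤ) :
    constantCoeff (pderiv i (pderiv j P)) =
      coeff (Finsupp.single i 1 + Finsupp.single j 1) P := by
  induction P using MvPolynomial.induction_on' with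
  | add p q hp hq => simp [hp, hq]
  | monomial s r =>
    classical
    rw [pderiv_monomial, pderiv_monomial, constantCoeff_monomial, coeff_monomial]
    have hrw : ((s - Finsupp.single j 1 : Fin m →₀ ℕ)) i = s i := by
      rw [Finsupp.tsub_apply, Finsupp.single_apply, if_neg (fun h => hij h.symm), tsub_zero]
    by_cases hs : s = Finsupp.single i 1 + Finsupp.single j 1
    · subst hs
      have h1 : (Finsupp.single i 1 + Finsupp.single j 1) - Finsupp.single j 1
          = Finsupp.single i 1 := add_tsub_cancel_right _ _
      rw [h1]
      simp [Finsupp.single_apply, hij, hij.symm, tsub_self]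
    · rw [if_neg hs]
      by_cases h0 : s - Finsupp.single j 1 - Finsupp.single i 1 = 0
      · rw [if_pos h0, hrw]
        by_cases hsj : s j = 0
        · simp [hsj]
        by_cases hsi : s i = 0
        · simp [hsi]
        exfalso
        apply hs
        have hle : s ≤ Finsupp.single i 1 + Finsupp.single j 1 := by
          rw [← tsub_le_iff_left, ← tsub_eq_zero_iff_le]
          rwa [tsub_right_comm] at h0
        have hge : Finsupp.single i 1 + Finsupp.single j 1 ≤ s := by
          rw [Finsupp.le_def]
          intro x
          rw [Finsupp.add_apply, Finsupp.single_apply, Finsupp.single_apply]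
          by_cases hxi : i = x
          · subst hxi; rw [if_pos rfl, if_neg (fun h => hij h.symm)]; omega
          · rw [if_neg hxi]
            by_cases hxj : j = x
            · subst hxj; rw [if_pos rfl]; omega
            · rw [if_neg hxj]; omega
        exact le_antisymm hle hge
      · rw [if_neg h0]


open MvPolynomial Finsupp

lemma aux_expand_monomial {R : Type*} [CommSemiring R] {σ : Type*} (p : ℕ) (hp : p ≠ 0)
    (d : σ →₀ ℕ) (r : R) :
    expand p (monomial d r) = monomial (p • d) r := by
  rw [MvPolynomial.expand_monomial, monomial_eq]

lemma aux_coeff_expand {R : Type*} [CommSemiring R] {σ : Type*} (p : ℕ) (hp : p ≠ 0)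
    (P : MvPolynomial σ R) (α : σ →₀ ℕ) :
    coeff (p • α) (expand p P) = coeff α P := by
  classical
  induction P using MvPolynomial.induction_on' with
  | add f g hf hg => simp [hf, hg]
  | monomial s r =>
    rw [aux_expand_monomial p hp, coeff_monomial, coeff_monomial]
    congr 1
    simp only [eq_iff_iff]
    constructor
    · intro h
      ext x
      have := DFunLike.congr_fun h x
      simp only [Finsupp.smul_apply, smul_eq_mul] at this
      exact Nat.eq_of_mul_eq_mul_left (Nat.pos_of_ne_zero hp) this
    · rintro rfl; rfl

lemma aux_expand_expand {R : Type*} [CommSemiring R] {σ : Type*} (p q : ℕ)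
    (P : MvPolynomial σ R) :
    expand p (expand q P) = expand (p * q) P := by
  have : (expand p).comp (expand q) = (expand (p * q) : MvPolynomial σ R →ₐ[R] _) := by
    apply MvPolynomial.algHom_ext
    intro i
    simp [← pow_mul, mul_comm p q]
  exact DFunLike.congr_fun this P

lemma aux_zmod_sq {σ : Type*} (F : MvPolynomial σ (ZMod 2)) : F ^ 2 = expand 2 F := by
  have h : (frobenius (MvPolynomial σ (ZMod 2)) 2) =
      ((expand 2 : MvPolynomial σ (ZMod 2) →ₐ[ZMod 2] _) : MvPolynomial σ (ZMod 2) →+* _) := by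
    apply MvPolynomial.ringHom_ext
    · intro a
      simp only [RingHom.coe_coe, expand_C, frobenius_def]
      rw [← C_pow, ZMod.pow_card]
    · intro i
      simp [frobenius_def]
  calc F ^ 2 = frobenius (MvPolynomial σ (ZMod 2)) 2 F := (frobenius_def _ _).symm
    _ = expand 2 F := by rw [h]; rfl

lemma aux_zmod_pow_expand {σ : Type*} (F : MvPolynomial σ (ZMod 2)) (k : ℕ) :
    F ^ (2 ^ k) = expand (2 ^ k) F := by
  induction k with
  | zero => simp [expand_one_apply]
  | succ k ih =>
    rw [pow_succ, pow_mul, ih, aux_zmod_sq, aux_expand_expand, mul_comm]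


-- exact value of coeff of x_i x_j in f^N
lemma aux_coeff_pow {m : ℕ} (i j : Fin m) (hij : i ≠ j) (f : MvPolynomial (Fin m) ℤ)
    (N : ℕ) (hN : 2 ≤ N) :
    coeff (Finsupp.single i 1 + Finsupp.single j 1) (f ^ N) =
      (N : ℤ) * ((N - 1 : ℤ) * (constantCoeff f) ^ (N - 2) *
          constantCoeff (pderiv i f) * constantCoeff (pderiv j f)
        + (constantCoeff f) ^ (N - 1) * constantCoeff (pderiv i (pderiv j f))) := by
  rw [← aux_cc_pderiv2 i j hij]
  rw [pderiv_pow]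
  have hcast : ((N : MvPolynomial (Fin m) ℤ)) = C (N : ℤ) := by
    simp [map_natCast (C : ℤ →+* MvPolynomial (Fin m) ℤ) N]
  rw [hcast, mul_assoc, pderiv_C_mul, pderiv_mul, pderiv_pow]
  simp only [map_mul, map_add, map_pow, constantCoeff_C]
  have h1 : ((N - 1 : ℕ) : MvPolynomial (Fin m) ℤ) = C ((N : ℤ) - 1) := by
    have : ((N - 1 : ℕ) : ℤ) = (N : ℤ) - 1 := by omega
    rw [← this]
    exact (map_natCast (C : ℤ →+* MvPolynomial (Fin m) ℤ) _).symm
  rw [h1]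
  simp only [map_mul, map_add, map_pow, constantCoeff_C]
  have h2 : N - 1 - 1 = N - 2 := by omega
  rw [h2]

lemma aux_coeff_sq {m : ℕ} (i j : Fin m) (hij : i ≠ j) (f : MvPolynomial (Fin m) ℤ) :
    coeff (Finsupp.single i 1 + Finsupp.single j 1) (f ^ 2) =
      2 * (constantCoeff (pderiv i f) * constantCoeff (pderiv j f)
        + constantCoeff f * constantCoeff (pderiv i (pderiv j f))) := by
  rw [← aux_cc_pderiv2 i j hij]
  rw [sq, pderiv_mul, map_add, pderiv_mul, pderiv_mul]
  simp only [map_add, map_mul]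
  ring

lemma main_val {m : ℕ} (n : ℕ) (hn : 2 ≤ n) (f : MvPolynomial (Fin m) ℤ) (i j : Fin m)
    (hij : i ≠ j) :
    ((MvPolynomial.coeff (Finsupp.single i 1 + Finsupp.single j 1) (f ^ 2 ^ n) / 2 ^ n +
        MvPolynomial.coeff
          (Finsupp.single i (2 ^ (n - 1)) + Finsupp.single j (2 ^ (n - 1)))
          (f ^ 2 ^ n) / 2 : ℤ) : ZMod 2) =
      (1 + ((constantCoeff f : ℤ) : ZMod 2)) *
        ((constantCoeff (pderiv i f) : ℤ) : ZMod 2) *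
        ((constantCoeff (pderiv j f) : ℤ) : ZMod 2) := by
  set c : ℤ := constantCoeff f with hc
  set a : ℤ := constantCoeff (pderiv i f) with ha
  set b : ℤ := constantCoeff (pderiv j f) with hb
  set d : ℤ := constantCoeff (pderiv i (pderiv j f)) with hd
  -- first coefficient
  have hA := aux_coeff_pow i j hij f (2 ^ n) (by have := Nat.one_lt_two_pow_iff (n := n); omega)
  have hA2 : coeff (Finsupp.single i 1 + Finsupp.single j 1) (f ^ 2 ^ n) / 2 ^ n =
      ((2 ^ n : ℤ) - 1) * c ^ (2 ^ n - 2) * a * b + c ^ (2 ^ n - 1) * d := by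
    rw [hA]
    push_cast
    exact Int.mul_ediv_cancel_left _ (by positivity)
  -- second coefficient
  set q : ℕ := 2 ^ (n - 1) with hq
  set E : MvPolynomial (Fin m) ℤ := expand q f with hE
  set D : MvPolynomial (Fin m) ℤ := f ^ q - E with hD
  have hDeven : ∀ β, (2 : ℤ) ∣ coeff β D := by
    intro β
    have hmap : MvPolynomial.map (Int.castRingHom (ZMod 2)) D = 0 := by
      rw [hD, map_sub, map_pow, hE, map_expand, hq, aux_zmod_pow_expand, sub_self]
    have := congrArg (coeff β) hmap
    rw [MvPolynomial.coeff_map, coeff_zero] at this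
    rw [eq_intCast] at this
    exact_mod_cast (ZMod.intCast_zmod_eq_zero_iff_dvd _ 2).mp this
  have hq0 : q ≠ 0 := pow_ne_zero _ (by norm_num)
  have hμ : Finsupp.single i q + Finsupp.single j q
      = q • (Finsupp.single i 1 + Finsupp.single j 1) := by
    rw [smul_add, Finsupp.smul_single, Finsupp.smul_single, smul_eq_mul, mul_one]
  have hEsq : coeff (Finsupp.single i q + Finsupp.single j q) (E ^ 2)
      = 2 * (a * b + c * d) := by
    rw [hE, ← map_pow, hμ, aux_coeff_expand q hq0, aux_coeff_sq i j hij f]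
  obtain ⟨k1, hk1⟩ : (2:ℤ) ∣ coeff (Finsupp.single i q + Finsupp.single j q) (E * D) := by
    rw [MvPolynomial.coeff_mul]
    exact Finset.dvd_sum fun x _ => Dvd.dvd.mul_left (hDeven x.2) _
  obtain ⟨k2, hk2⟩ : (4:ℤ) ∣ coeff (Finsupp.single i q + Finsupp.single j q) (D * D) := by
    rw [MvPolynomial.coeff_mul]
    refine Finset.dvd_sum fun x _ => ?_
    have h4 : (4:ℤ) = 2 * 2 := by norm_num
    rw [h4]
    exact mul_dvd_mul (hDeven x.1) (hDeven x.2)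
  have hf2 : f ^ 2 ^ n = E ^ 2 + (E * D + E * D + D * D) := by
    have h2n : 2 ^ n = q * 2 := by
      rw [hq, ← pow_succ]
      congr 1
      omega
    have hfq : f ^ q = E + D := by rw [hD]; ring
    rw [h2n, pow_mul, hfq]
    ring
  have hBco : coeff (Finsupp.single i q + Finsupp.single j q) (f ^ 2 ^ n)
      = 2 * ((a * b + c * d) + 2 * (k1 + k2)) := by
    rw [hf2, coeff_add, coeff_add, coeff_add, hEsq, hk1, hk2]
    ring
  have hB2 : coeff (Finsupp.single i q + Finsupp.single j q) (f ^ 2 ^ n) / 2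
      = (a * b + c * d) + 2 * (k1 + k2) := by
    rw [hBco]
    exact Int.mul_ediv_cancel_left _ two_ne_zero
  rw [hA2, hB2]
  push_cast
  have h2z : (2 : ZMod 2) = 0 := by decide
  have hp1 : (1:ℕ) ≤ 2 ^ n - 2 := by
    have h4 : (4:ℕ) ≤ 2 ^ n := by
      calc (4:ℕ) = 2 ^ 2 := by norm_num
        _ ≤ 2 ^ n := Nat.pow_le_pow_right (by norm_num) hn
    omega
  have hp2 : (1:ℕ) ≤ 2 ^ n - 1 := by
    have h4 : (4:ℕ) ≤ 2 ^ n := by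
      calc (4:ℕ) = 2 ^ 2 := by norm_num
        _ ≤ 2 ^ n := Nat.pow_le_pow_right (by norm_num) hn
    omega
  rw [zmod2_pow ((c : ZMod 2)) hp1, zmod2_pow ((c : ZMod 2)) hp2]
  have hn2 : ((2:ZMod 2)) ^ n = 0 := by
    rw [h2z]
    exact zero_pow (by omega)
  rw [hn2]
  linear_combination ((k1:ZMod 2) + k2 + (c:ZMod 2) * d - (c:ZMod 2) * a * b) * h2z
def auxG (m v : ℕ) : (Fin v → Fin m → ZMod 2) → ({p : Fin m × Fin m // p.1 < p.2} → ZMod 2) :=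
  fun w p => ∑ t, w t p.1.1 * w t p.1.2

/-- The image under `Π` of the set of signed sums of `v` `2^n`-th powers has at most
`2^(v·m)` elements. -/
theorem stmt_14 (n m v : ℕ) (hn : 2 ≤ n) (hm : 2 ≤ m) (hv : 1 ≤ v)
    (Pi : (Subring.closure
        (Set.range fun g : MvPolynomial (Fin m) ℤ => g ^ (2 ^ n))) →+
          ({p : Fin m × Fin m // p.1 < p.2} → ZMod 2))
    (hPi : ∀ (f : MvPolynomial (Fin m) ℤ) (p : {p : Fin m × Fin m // p.1 < p.2}),
      Pi ⟨f ^ 2 ^ n, Subring.subset_closure ⟨f, rfl⟩⟩ p =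
        ((MvPolynomial.coeff (Finsupp.single p.1.1 1 + Finsupp.single p.1.2 1)
              (f ^ 2 ^ n) / 2 ^ n +
            MvPolynomial.coeff
              (Finsupp.single p.1.1 (2 ^ (n - 1)) + Finsupp.single p.1.2 (2 ^ (n - 1)))
              (f ^ 2 ^ n) / 2 : ℤ) : ZMod 2)) :
    Nat.card (Pi '' {x : (Subring.closure
        (Set.range fun g : MvPolynomial (Fin m) ℤ => g ^ (2 ^ n))) |
      ∃ (f : Fin v → MvPolynomial (Fin m) ℤ) (ε : Fin v → MvPolynomial (Fin m) ℤ),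
        (∀ t, ε t = 1 ∨ ε t = -1) ∧ (x : MvPolynomial (Fin m) ℤ) =
          ∑ t, ε t * f t ^ (2 ^ n)}) ≤ 2 ^ (v * m) := by
  classical
  have hsub : (Pi '' {x : (Subring.closure
      (Set.range fun g : MvPolynomial (Fin m) ℤ => g ^ (2 ^ n))) |
      ∃ (f : Fin v → MvPolynomial (Fin m) ℤ) (ε : Fin v → MvPolynomial (Fin m) ℤ),
        (∀ t, ε t = 1 ∨ ε t = -1) ∧ (x : MvPolynomial (Fin m) ℤ) =
          ∑ t, ε t * f t ^ (2 ^ n)}) ⊆ Set.range (auxG m v) := by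
    rintro z ⟨x, ⟨f, ε, hε, hx⟩, rfl⟩
    refine ⟨fun t i => (1 + ((MvPolynomial.constantCoeff (f t) : ℤ) : ZMod 2)) *
      ((MvPolynomial.constantCoeff (MvPolynomial.pderiv i (f t)) : ℤ) : ZMod 2), ?_⟩
    have hmem : ∀ t, (ε t * f t ^ 2 ^ n) ∈ Subring.closure
        (Set.range fun g : MvPolynomial (Fin m) ℤ => g ^ (2 ^ n)) := by
      intro t
      rcases hε t with h | h
      · rw [h, one_mul]
        exact Subring.subset_closure ⟨f t, rfl⟩
      · rw [h, neg_one_mul]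
        exact neg_mem (Subring.subset_closure ⟨f t, rfl⟩)
    have hx' : x = ∑ t, (⟨ε t * f t ^ 2 ^ n, hmem t⟩ : Subring.closure
        (Set.range fun g : MvPolynomial (Fin m) ℤ => g ^ (2 ^ n))) := by
      apply Subtype.ext
      rw [hx]
      push_cast
      rfl
    rw [hx', map_sum]
    unfold auxG
    funext p
    rw [Finset.sum_apply]
    refine Finset.sum_congr rfl fun t _ => ?_
    have hij : p.1.1 ≠ p.1.2 := ne_of_lt p.2
    have hid := zmod2_mul_self (1 + ((MvPolynomial.constantCoeff (f t) : ℤ) : ZMod 2))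
    rcases hε t with h | h
    · have hyt : (⟨ε t * f t ^ 2 ^ n, hmem t⟩ : Subring.closure
          (Set.range fun g : MvPolynomial (Fin m) ℤ => g ^ (2 ^ n)))
          = ⟨f t ^ 2 ^ n, Subring.subset_closure ⟨f t, rfl⟩⟩ := by
        apply Subtype.ext
        show ε t * f t ^ 2 ^ n = f t ^ 2 ^ n
        rw [h, one_mul]
      rw [hyt, hPi, main_val n hn (f t) p.1.1 p.1.2 hij]
      linear_combination (((MvPolynomial.constantCoeff (MvPolynomial.pderiv p.1.1 (f t)) : ℤ) : ZMod 2) *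
        ((MvPolynomial.constantCoeff (MvPolynomial.pderiv p.1.2 (f t)) : ℤ) : ZMod 2)) * hid
    · have hyt : (⟨ε t * f t ^ 2 ^ n, hmem t⟩ : Subring.closure
          (Set.range fun g : MvPolynomial (Fin m) ℤ => g ^ (2 ^ n)))
          = -⟨f t ^ 2 ^ n, Subring.subset_closure ⟨f t, rfl⟩⟩ := by
        apply Subtype.ext
        show ε t * f t ^ 2 ^ n = -(f t ^ 2 ^ n)
        rw [h, neg_one_mul]
      rw [hyt, map_neg]
      have hneg : ∀ y : ZMod 2, -y = y := by decide
      rw [_root_.Pi.neg_apply, hneg, hPi, main_val n hn (f t) p.1.1 p.1.2 hij]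
      linear_combination (((MvPolynomial.constantCoeff (MvPolynomial.pderiv p.1.1 (f t)) : ℤ) : ZMod 2) *
        ((MvPolynomial.constantCoeff (MvPolynomial.pderiv p.1.2 (f t)) : ℤ) : ZMod 2)) * hid
  refine le_trans (Nat.card_mono (Set.toFinite _) hsub) ?_
  refine le_trans (Finite.card_range_le (auxG m v)) ?_
  rw [Nat.card_eq_fintype_card]
  simp [ZMod.card, ← pow_mul]
  rw [mul_comm]
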